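/- Let S₀ be the central subspace of the regression of Y on X, i.e., S₀ is a dimension-reduction subspace and S₀ is contained in every dimension-reduction subspace. Then for any subspace H of ℝ^p, the coordinate hypothesis P_H S₀ = {0} (equivalently, S₀ ⊆ H^⊥) holds if and only if Y and P_H X are conditionally independent given the σ-algebra generated by Q_H X. -/

import Mathlib

open MeasureTheory ProbabilityTheory

section Aux

/-- If the conditional expectation of indicators of `Y`-sets given `n` agrees with that given
`m' ≤ n`, then `Y` is conditionally independent (given `m'`) of any function whose σ-algebra
is contained in `n`. -/
lemma aux_condIndepFun_of_condexp_eq {Ω β γ : Type*} [mβ : MeasurableSpace β]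
    [mγ : MeasurableSpace γ] {m' n : MeasurableSpace Ω} {mΩ : MeasurableSpace Ω}
    [StandardBorelSpace Ω] {μ : Measure Ω} [IsProbabilityMeasure μ]
    (hm'n : m' ≤ n) (hn : n ≤ mΩ)
    {Y : Ω → β} {g : Ω → γ} (hY : Measurable Y) (hg : Measurable g)
    (hgn : MeasurableSpace.comap g mγ ≤ n)
    (hch : ∀ s : Set β, MeasurableSet s →
      (μ⟦Y ⁻¹' s | n⟧) =ᵐ[μ] μ⟦Y ⁻¹' s | m'⟧) :
    CondIndepFun m' (hm'n.trans hn) Y g μ := by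
  rw [condIndepFun_iff m' (hm'n.trans hn) Y g hY hg μ]
  rintro t1 t2 ⟨s, hs, rfl⟩ ht2
  have hBn : MeasurableSet[n] t2 := hgn t2 ht2
  have hBΩ : MeasurableSet t2 := hn _ hBn
  have hAΩ : MeasurableSet (Y ⁻¹' s) := hY hs
  have hind : Set.indicator (Y ⁻¹' s ∩ t2) (fun _ => (1 : ℝ))
      = Set.indicator t2 (fun _ => (1 : ℝ)) * Set.indicator (Y ⁻¹' s) (fun _ => (1 : ℝ)) := by
    rw [Set.inter_comm]
    exact Set.inter_indicator_one
  have hAint : Integrable (Set.indicator (Y ⁻¹' s) fun _ => (1 : ℝ)) μ :=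
    (integrable_const (1 : ℝ)).indicator hAΩ
  have hABint : Integrable
      (Set.indicator t2 (fun _ => (1 : ℝ)) * Set.indicator (Y ⁻¹' s) fun _ => (1 : ℝ)) μ := by
    rw [← hind]; exact (integrable_const (1 : ℝ)).indicator (hAΩ.inter hBΩ)
  have hsm : StronglyMeasurable[n] (Set.indicator t2 fun _ => (1 : ℝ)) :=
    stronglyMeasurable_const.indicator hBn
  have h1 : (μ⟦Y ⁻¹' s ∩ t2 | n⟧)
      =ᵐ[μ] Set.indicator t2 (fun _ => (1 : ℝ)) * μ⟦Y ⁻¹' s | n⟧ := by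
    refine (condExp_congr_ae (by rw [hind])).trans ?_
    exact condExp_mul_of_stronglyMeasurable_left hsm hABint hAint
  have h2 : (μ⟦Y ⁻¹' s ∩ t2 | n⟧)
      =ᵐ[μ] (μ⟦Y ⁻¹' s | m'⟧) * Set.indicator t2 fun _ => (1 : ℝ) := by
    refine h1.trans ?_
    filter_upwards [hch s hs] with ω hω
    simp only [Pi.mul_apply]
    rw [hω, mul_comm]
  have hGt : Integrable ((μ⟦Y ⁻¹' s | m'⟧) * Set.indicator t2 fun _ => (1 : ℝ)) μ := by
    have heq : ((μ⟦Y ⁻¹' s | m'⟧) * Set.indicator t2 fun _ => (1 : ℝ))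
        = Set.indicator t2 (μ⟦Y ⁻¹' s | m'⟧) := by
      funext ω; by_cases hω : ω ∈ t2 <;> simp [Set.indicator_apply, hω]
    rw [heq]
    exact integrable_condExp.indicator hBΩ
  have hBint : Integrable (Set.indicator t2 fun _ => (1 : ℝ)) μ :=
    (integrable_const (1 : ℝ)).indicator hBΩ
  calc (μ⟦Y ⁻¹' s ∩ t2 | m'⟧)
      =ᵐ[μ] μ[μ⟦Y ⁻¹' s ∩ t2 | n⟧ | m'] := (condExp_condExp_of_le hm'n hn).symm
    _ =ᵐ[μ] μ[(μ⟦Y ⁻¹' s | m'⟧) * Set.indicator t2 fun _ => (1 : ℝ) | m'] := condExp_congr_ae h2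
    _ =ᵐ[μ] (μ⟦Y ⁻¹' s | m'⟧) * μ⟦t2 | m'⟧ :=
        condExp_mul_of_stronglyMeasurable_left stronglyMeasurable_condExp hGt hBint

/-- Conditional independence of `Y` and `Z` given `m'` implies that conditional expectations of
indicators of `Y`-sets given `σ(Z) ⊔ m'` agree with those given `m'`. -/
lemma aux_condexp_eq_of_condIndepFun {Ω β γ : Type*} [mβ : MeasurableSpace β]
    [mγ : MeasurableSpace γ] {m' n : MeasurableSpace Ω} {mΩ : MeasurableSpace Ω}
    [StandardBorelSpace Ω] {μ : Measure Ω} [IsProbabilityMeasure μ]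
    (hm' : m' ≤ mΩ)
    {Y : Ω → β} {Z : Ω → γ} (hY : Measurable Y) (hZ : Measurable Z)
    (h : CondIndepFun m' hm' Y Z μ)
    (hn_def : n = MeasurableSpace.comap Z mγ ⊔ m')
    {s : Set β} (hs : MeasurableSet s) :
    (μ⟦Y ⁻¹' s | n⟧) =ᵐ[μ] μ⟦Y ⁻¹' s | m'⟧ := by
  have hprod := (condIndepFun_iff m' hm' Y Z hY hZ μ).mp h
  have hle1 : MeasurableSpace.comap Z mγ ≤ n := hn_def ▸ le_sup_left
  have hle2 : m' ≤ n := hn_def ▸ le_sup_right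
  have hn : n ≤ mΩ := hn_def ▸ sup_le hZ.comap_le hm'
  have hAΩ : MeasurableSet[mΩ] (Y ⁻¹' s) := hY hs
  have hAint : Integrable (Set.indicator (Y ⁻¹' s) fun _ => (1 : ℝ)) μ :=
    (integrable_const (1 : ℝ)).indicator hAΩ
  set G := (μ⟦Y ⁻¹' s | m'⟧) with hG_def
  set P : Set (Set Ω) := {E | ∃ t c, MeasurableSet[MeasurableSpace.comap Z mγ] t ∧
    MeasurableSet[m'] c ∧ E = t ∩ c} with hP_def
  have h_eq : n = MeasurableSpace.generateFrom P := by
    rw [hn_def]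
    refine le_antisymm (sup_le ?_ ?_) (MeasurableSpace.generateFrom_le ?_)
    · intro E hE
      exact MeasurableSpace.measurableSet_generateFrom
        ⟨E, Set.univ, hE, MeasurableSet.univ, (Set.inter_univ E).symm⟩
    · intro E hE
      exact MeasurableSpace.measurableSet_generateFrom
        ⟨Set.univ, E, MeasurableSet.univ, hE, (Set.univ_inter E).symm⟩
    · rintro E ⟨t, c, ht, hc, rfl⟩
      exact ((le_sup_left : MeasurableSpace.comap Z mγ ≤ MeasurableSpace.comap Z mγ ⊔ m') t ht).inter
        ((le_sup_right : m' ≤ MeasurableSpace.comap Z mγ ⊔ m') c hc)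
  have h_pi : IsPiSystem P := by
    rintro E1 ⟨t1, c1, ht1, hc1, rfl⟩ E2 ⟨t2, c2, ht2, hc2, rfl⟩ -
    exact ⟨t1 ∩ t2, c1 ∩ c2, ht1.inter ht2, hc1.inter hc2, by
      rw [Set.inter_inter_inter_comm]⟩
  have key : ∀ ⦃E⦄, MeasurableSet[n] E →
      ∫ x in E, G x ∂μ = ∫ x in E, Set.indicator (Y ⁻¹' s) (fun _ => (1 : ℝ)) x ∂μ := by
    refine MeasurableSpace.induction_on_inter (m := n) h_eq h_pi (by simp) ?_ ?_ ?_
    · rintro E ⟨t, c, ht, hc, rfl⟩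
      have htΩ : MeasurableSet[mΩ] t := hZ.comap_le t ht
      have hcΩ : MeasurableSet[mΩ] c := hm' c hc
      have hAt : (μ⟦Y ⁻¹' s ∩ t | m'⟧) =ᵐ[μ] (μ⟦Y ⁻¹' s | m'⟧) * μ⟦t | m'⟧ :=
        hprod (Y ⁻¹' s) t ⟨s, hs, rfl⟩ ht
      have hGt_eq : (G * Set.indicator t fun _ => (1 : ℝ)) = Set.indicator t G := by
        funext ω; by_cases hω : ω ∈ t <;> simp [Set.indicator_apply, hω]
      have hGt_int : Integrable (G * Set.indicator t fun _ => (1 : ℝ)) μ := by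
        rw [hGt_eq]; exact integrable_condExp.indicator htΩ
      have ht_int : Integrable (Set.indicator t fun _ => (1 : ℝ)) μ :=
        (integrable_const (1 : ℝ)).indicator htΩ
      have hpull : (μ[G * Set.indicator t fun _ => (1 : ℝ) | m']) =ᵐ[μ] G * μ⟦t | m'⟧ :=
        condExp_mul_of_stronglyMeasurable_left stronglyMeasurable_condExp hGt_int ht_int
      have hAtΩ : MeasurableSet[mΩ] (Y ⁻¹' s ∩ t) := hAΩ.inter htΩ
      calc ∫ x in t ∩ c, G x ∂μ
          = ∫ x in c ∩ t, G x ∂μ := by rw [Set.inter_comm]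
        _ = ∫ x in c, Set.indicator t G x ∂μ := (setIntegral_indicator htΩ).symm
        _ = ∫ x in c, (G * Set.indicator t fun _ => (1 : ℝ)) x ∂μ := by rw [hGt_eq]
        _ = ∫ x in c, (μ[G * Set.indicator t fun _ => (1 : ℝ) | m']) x ∂μ :=
            (setIntegral_condExp hm' hGt_int hc).symm
        _ = ∫ x in c, (μ⟦Y ⁻¹' s ∩ t | m'⟧) x ∂μ := by
            refine setIntegral_congr_ae hcΩ ?_
            filter_upwards [hpull, hAt] with ω h1 h2 _
            rw [h1, ← h2]
        _ = ∫ x in c, Set.indicator (Y ⁻¹' s ∩ t) (fun _ => (1 : ℝ)) x ∂μ :=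
            setIntegral_condExp hm' ((integrable_const (1 : ℝ)).indicator hAtΩ) hc
        _ = ∫ x in c ∩ (Y ⁻¹' s ∩ t), (1 : ℝ) ∂μ := setIntegral_indicator hAtΩ
        _ = ∫ x in (t ∩ c) ∩ Y ⁻¹' s, (1 : ℝ) ∂μ := by
            rw [show c ∩ (Y ⁻¹' s ∩ t) = (t ∩ c) ∩ Y ⁻¹' s by ext x; simp; tauto]
        _ = ∫ x in t ∩ c, Set.indicator (Y ⁻¹' s) (fun _ => (1 : ℝ)) x ∂μ :=
            (setIntegral_indicator hAΩ).symm
    · intro E hE hCE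
      have hEΩ : MeasurableSet[mΩ] E := hn _ hE
      have h1 := integral_add_compl hEΩ (integrable_condExp : Integrable G μ)
      have h2 := integral_add_compl hEΩ hAint
      have h3 : ∫ x, G x ∂μ
          = ∫ x, Set.indicator (Y ⁻¹' s) (fun _ => (1 : ℝ)) x ∂μ := integral_condExp hm'
      linarith
    · intro f hdisj hmeas hC
      have hmΩ' : ∀ i, MeasurableSet[mΩ] (f i) := fun i => hn _ (hmeas i)
      rw [integral_iUnion hmΩ' hdisj integrable_condExp.integrableOn,
        integral_iUnion hmΩ' hdisj hAint.integrableOn]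
      exact tsum_congr hC
  exact (ae_eq_condExp_of_forall_setIntegral_eq hn hAint
    (fun E _ _ => integrable_condExp.integrableOn)
    (fun E hE _ => key hE)
    (stronglyMeasurable_condExp.mono hle2).aestronglyMeasurable).symm

/-- Transfer the conditional-expectation characterization between intermediate σ-algebras. -/
lemma aux_condexp_eq_trans {Ω : Type*} {m₁ m₂ n : MeasurableSpace Ω} {mΩ : MeasurableSpace Ω}
    {μ : Measure Ω} [IsProbabilityMeasure μ] (h12 : m₁ ≤ m₂) (h2n : m₂ ≤ n)
    (hn : n ≤ mΩ) {f : Ω → ℝ} (hf : (μ[f|n]) =ᵐ[μ] μ[f|m₁]) :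
    (μ[f|n]) =ᵐ[μ] μ[f|m₂] := by
  have h1 : (μ[f|m₂]) =ᵐ[μ] μ[μ[f|n]|m₂] := (condExp_condExp_of_le h2n hn).symm
  have h2 : (μ[μ[f|n]|m₂]) =ᵐ[μ] μ[μ[f|m₁]|m₂] := condExp_congr_ae hf
  have h3 : (μ[μ[f|m₁]|m₂]) = μ[f|m₁] :=
    condExp_of_stronglyMeasurable (h2n.trans hn)
      (stronglyMeasurable_condExp.mono h12) integrable_condExp
  exact (h1.trans (h2.trans ((Filter.EventuallyEq.of_eq h3).trans hf.symm))).symm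

end Aux

/-- A subspace `S` of the predictor space is a *dimension-reduction subspace* for the
regression of `Y` on `X` if `Y` and `X` are conditionally independent given the σ-algebra
generated by `P_S ∘ X`, where `P_S` is the orthogonal projection onto `S`. -/
def IsDRS {p : ℕ} {Ω : Type*} [MeasurableSpace Ω] [StandardBorelSpace Ω]
    (μ : Measure Ω) [IsFiniteMeasure μ]
    (X : Ω → EuclideanSpace ℝ (Fin p)) (Y : Ω → ℝ) (hX : Measurable X)
    (S : Submodule ℝ (EuclideanSpace ℝ (Fin p))) : Prop :=
  CondIndepFun
    (MeasurableSpace.comap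
      (fun ω => ((Submodule.orthogonalProjectionOnto S (X ω) : S) : EuclideanSpace ℝ (Fin p)))
      inferInstance)
    (Measurable.comap_le
      ((continuous_subtype_val.comp (Submodule.orthogonalProjectionOnto S).continuous).measurable.comp hX))
    Y X μ

/-- Let `S₀` be the central subspace of the regression of `Y` on `X`: a
dimension-reduction subspace contained in every dimension-reduction subspace.  Then for any
subspace `H` of `ℝ^p`, the coordinate hypothesis `P_H S₀ = {0}` (equivalently `S₀ ⊆ Hᗮ`)
holds if and only if `Y` and `P_H X` are conditionally independent given the σ-algebra
generated by `Q_H X` (the orthogonal projection of `X` onto `Hᗮ`). -/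
theorem stmt_0 {p : ℕ} {Ω : Type*} [MeasurableSpace Ω] [StandardBorelSpace Ω]
    (μ : Measure Ω) [IsProbabilityMeasure μ]
    (X : Ω → EuclideanSpace ℝ (Fin p)) (Y : Ω → ℝ)
    (hX : Measurable X) (hY : Measurable Y)
    (S₀ : Submodule ℝ (EuclideanSpace ℝ (Fin p)))
    (hS₀ : IsDRS μ X Y hX S₀)
    (hmin : ∀ S : Submodule ℝ (EuclideanSpace ℝ (Fin p)), IsDRS μ X Y hX S → S₀ ≤ S)
    (H : Submodule ℝ (EuclideanSpace ℝ (Fin p))) :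
    S₀ ≤ Hᗮ ↔
      CondIndepFun
        (MeasurableSpace.comap
          (fun ω => ((Submodule.orthogonalProjectionOnto Hᗮ (X ω) : Hᗮ) : EuclideanSpace ℝ (Fin p)))
          inferInstance)
        (Measurable.comap_le
          ((continuous_subtype_val.comp
            (Submodule.orthogonalProjectionOnto Hᗮ).continuous).measurable.comp hX))
        Y (fun ω => ((Submodule.orthogonalProjectionOnto H (X ω) : H) : EuclideanSpace ℝ (Fin p))) μ := by
  have hcont : ∀ K : Submodule ℝ (EuclideanSpace ℝ (Fin p)),
      Measurable (fun x : EuclideanSpace ℝ (Fin p) =>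
        ((Submodule.orthogonalProjectionOnto K x : K) : EuclideanSpace ℝ (Fin p))) := fun K =>
    (continuous_subtype_val.comp (Submodule.orthogonalProjectionOnto K).continuous).measurable
  set W : Ω → EuclideanSpace ℝ (Fin p) :=
    fun ω => ((Submodule.orthogonalProjectionOnto Hᗮ (X ω) : Hᗮ) : EuclideanSpace ℝ (Fin p)) with hW_def
  set V : Ω → EuclideanSpace ℝ (Fin p) :=
    fun ω => ((Submodule.orthogonalProjectionOnto S₀ (X ω) : S₀) : EuclideanSpace ℝ (Fin p)) with hV_def
  set Z : Ω → EuclideanSpace ℝ (Fin p) :=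
    fun ω => ((Submodule.orthogonalProjectionOnto H (X ω) : H) : EuclideanSpace ℝ (Fin p)) with hZ_def
  have hWm : Measurable W := (hcont Hᗮ).comp hX
  have hVm : Measurable V := (hcont S₀).comp hX
  have hZm : Measurable Z := (hcont H).comp hX
  have hWX : MeasurableSpace.comap W inferInstance ≤ MeasurableSpace.comap X inferInstance := by
    have : W = (fun x : EuclideanSpace ℝ (Fin p) =>
        ((Submodule.orthogonalProjectionOnto Hᗮ x : Hᗮ) : EuclideanSpace ℝ (Fin p))) ∘ X := rfl
    rw [this, ← MeasurableSpace.comap_comp]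
    exact MeasurableSpace.comap_mono (hcont Hᗮ).comap_le
  have hZX : MeasurableSpace.comap Z inferInstance ≤ MeasurableSpace.comap X inferInstance := by
    have : Z = (fun x : EuclideanSpace ℝ (Fin p) =>
        ((Submodule.orthogonalProjectionOnto H x : H) : EuclideanSpace ℝ (Fin p))) ∘ X := rfl
    rw [this, ← MeasurableSpace.comap_comp]
    exact MeasurableSpace.comap_mono (hcont H).comap_le
  constructor
  · intro hle
    -- V is a function of W since S₀ ≤ Hᗮ
    have hVW : V = (fun x : EuclideanSpace ℝ (Fin p) =>
        ((Submodule.orthogonalProjectionOnto S₀ x : S₀) : EuclideanSpace ℝ (Fin p))) ∘ W := by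
      funext ω
      simp only [hV_def, hW_def, Function.comp_apply]
      rw [← Submodule.starProjection_apply Hᗮ, Submodule.orthogonalProjectionOnto_starProjection_of_le hle]
    have hmVW : MeasurableSpace.comap V inferInstance ≤ MeasurableSpace.comap W inferInstance := by
      rw [hVW, ← MeasurableSpace.comap_comp]
      exact MeasurableSpace.comap_mono (hcont S₀).comap_le
    have char1 : ∀ s : Set ℝ, MeasurableSet s →
        (μ⟦Y ⁻¹' s | MeasurableSpace.comap X inferInstance ⊔
          MeasurableSpace.comap V inferInstance⟧)
          =ᵐ[μ] μ⟦Y ⁻¹' s | MeasurableSpace.comap V inferInstance⟧ :=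
      fun s hs => aux_condexp_eq_of_condIndepFun (μ := μ) (Y := Y) (Z := X) hVm.comap_le hY hX hS₀ rfl hs
    have hnle : MeasurableSpace.comap X inferInstance ⊔ MeasurableSpace.comap V inferInstance
        ≤ _ := sup_le hX.comap_le hVm.comap_le
    have char2 : ∀ s : Set ℝ, MeasurableSet s →
        (μ⟦Y ⁻¹' s | MeasurableSpace.comap X inferInstance ⊔
          MeasurableSpace.comap V inferInstance⟧)
          =ᵐ[μ] μ⟦Y ⁻¹' s | MeasurableSpace.comap W inferInstance⟧ :=
      fun s hs => aux_condexp_eq_trans (μ := μ) hmVW (hWX.trans le_sup_left) hnle (char1 s hs)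
    exact aux_condIndepFun_of_condexp_eq (μ := μ) (Y := Y) (g := Z) (hWX.trans le_sup_left) hnle hY hZm
      (hZX.trans le_sup_left) char2
  · intro hci
    refine hmin Hᗮ ?_
    have char : ∀ s : Set ℝ, MeasurableSet s →
        (μ⟦Y ⁻¹' s | MeasurableSpace.comap Z inferInstance ⊔
          MeasurableSpace.comap W inferInstance⟧)
          =ᵐ[μ] μ⟦Y ⁻¹' s | MeasurableSpace.comap W inferInstance⟧ :=
      fun s hs => aux_condexp_eq_of_condIndepFun (μ := μ) (Y := Y) (Z := Z) hWm.comap_le hY hZm hci rfl hs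
    have hnle : MeasurableSpace.comap Z inferInstance ⊔ MeasurableSpace.comap W inferInstance
        ≤ _ := sup_le hZm.comap_le hWm.comap_le
    have hZn : Measurable[MeasurableSpace.comap Z inferInstance ⊔
        MeasurableSpace.comap W inferInstance] Z :=
      (measurable_iff_comap_le.mpr le_rfl).mono le_sup_left le_rfl
    have hWn : Measurable[MeasurableSpace.comap Z inferInstance ⊔
        MeasurableSpace.comap W inferInstance] W :=
      (measurable_iff_comap_le.mpr le_rfl).mono le_sup_right le_rfl
    have hXZW : X = fun ω => Z ω + W ω := by
      funext ω
      exact (Submodule.starProjection_add_starProjection_orthogonal (K := H) (X ω)).symm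
    have hXn : MeasurableSpace.comap X inferInstance ≤
        MeasurableSpace.comap Z inferInstance ⊔ MeasurableSpace.comap W inferInstance := by
      refine measurable_iff_comap_le.mp ?_
      rw [hXZW]
      exact hZn.add hWn
    exact aux_condIndepFun_of_condexp_eq (μ := μ) (Y := Y) (g := X) le_sup_right hnle hY hX hXn char
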